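/- Let $U: \mathcal{H}_N \to \mathcal{F}_+^{\leq N}$ be the unitary excitation map defined by $U\Psi = \bigoplus_{j=0}^{N} \mathcal{Q}^{\otimes_s j}\left( \frac{a_0^{N-j}}{\sqrt{(N-j)!}} \Psi \right)$, where $a_0$ annihilates the condensate mode $v_0$ and $\mathcal{Q}$ projects onto $\{v_0\}^\perp$. Then for every $k \neq 0$, $U^{\dagger} a_k^{\dagger} a_0 U = a_k^{\dagger} \sqrt{N - N_+}$ as operators on $\mathcal{F}_+^{\leq N}$, where $N_+$ is the number operator on $\mathcal{F}_+^{\leq N}$. -/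

import Mathlib

section LnssHelpers

variable {V : Type*} [NormedAddCommGroup V] [InnerProductSpace ℂ V]

/-- Eigenvectors of a symmetric operator with distinct natural eigenvalues are orthogonal. -/
lemma lnss_eig_orth (T : Module.End ℂ V)
    (hT : ∀ x y : V, (inner ℂ (T x) y : ℂ) = inner ℂ x (T y))
    {x y : V} {m n : ℕ} (hx : T x = (m : ℂ) • x) (hy : T y = (n : ℂ) • y)
    (hmn : m ≠ n) : (inner ℂ x y : ℂ) = 0 := by
  have h := hT x y
  rw [hx, hy, inner_smul_left, inner_smul_right] at h
  have hconj : (starRingEnd ℂ) ((m : ℕ) : ℂ) = (m : ℂ) := by simp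
  rw [hconj] at h
  have h2 : ((m : ℂ) - n) * inner ℂ x y = 0 := by ring_nf; linear_combination h
  rcases mul_eq_zero.1 h2 with h3 | h3
  · exact absurd (by exact_mod_cast sub_eq_zero.1 h3) hmn
  · exact h3

/-- If a finite family of eigenvectors (distinct natural eigenvalues) of a symmetric
operator sums to zero, each member is zero. -/
lemma lnss_eig_sum_zero (T : Module.End ℂ V)
    (hT : ∀ x y : V, (inner ℂ (T x) y : ℂ) = inner ℂ x (T y))
    (s : Finset ℕ) (w : ℕ → V) (hw : ∀ j ∈ s, T (w j) = (j : ℂ) • w j)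
    (hsum : ∑ j ∈ s, w j = 0) : ∀ i ∈ s, w i = 0 := by
  intro i hi
  have h0 : (inner ℂ (w i) (∑ j ∈ s, w j) : ℂ) = inner ℂ (w i) (w i) := by
    rw [inner_sum]
    rw [Finset.sum_eq_single_of_mem i hi]
    intro j hj hji
    exact lnss_eig_orth T hT (hw i hi) (hw j hj) (Ne.symm hji)
  rw [hsum, inner_zero_right] at h0
  exact inner_self_eq_zero.1 h0.symm

/-- Eigenvalue shift: if `a₀†a₀ v = c v` then `a₀†a₀ (a₀ v) = (c-1) (a₀ v)`. -/
lemma lnss_shift (a0 a0d : Module.End ℂ V) (hccr0 : a0 * a0d - a0d * a0 = 1)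
    {v : V} {c : ℂ} (hv : a0d (a0 v) = c • v) :
    a0d (a0 (a0 v)) = (c - 1) • a0 v := by
  have h2 := congrArg (fun T : Module.End ℂ V => T (a0 v)) hccr0
  simp only [LinearMap.sub_apply, Module.End.mul_apply, Module.End.one_apply] at h2
  have h3 : a0d (a0 (a0 v)) = a0 (a0d (a0 v)) - a0 v := by
    rw [eq_add_of_sub_eq h2]; abel
  rw [h3, hv, map_smul, sub_smul, one_smul]

/-- If `a₀†a₀ v = 0` then `a₀ v = 0`. -/
lemma lnss_kill (a0 a0d : Module.End ℂ V)
    (hadj0 : ∀ x y : V, (inner ℂ (a0d x) y : ℂ) = inner ℂ x (a0 y))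
    {v : V} (hv : a0d (a0 v) = 0) : a0 v = 0 := by
  have h := hadj0 (a0 v) v
  rw [hv, inner_zero_left] at h
  exact inner_self_eq_zero.1 h.symm

lemma lnss_pow_succ_apply (a0 : Module.End ℂ V) (j : ℕ) (x : V) :
    (a0 ^ (j + 1)) x = (a0 ^ j) (a0 x) := by
  rw [pow_succ, Module.End.mul_apply]

/-- `Π a₀^m v = if m = n then a₀^n v else 0` for an `n`-eigenvector `v` of `a₀†a₀`. -/
lemma lnss_pia (a0 a0d Pi0 : Module.End ℂ V)
    (hccr0 : a0 * a0d - a0d * a0 = 1)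
    (hadj0 : ∀ x y : V, (inner ℂ (a0d x) y : ℂ) = inner ℂ x (a0 y))
    (hPi_kills : Pi0 * a0d = 0)
    (hPi_id : ∀ Ψ : V, a0 Ψ = 0 → Pi0 Ψ = Ψ) :
    ∀ (n : ℕ) (v : V), a0d (a0 v) = (n : ℂ) • v →
      ∀ m : ℕ, Pi0 ((a0 ^ m) v) = if m = n then (a0 ^ n) v else 0 := by
  intro n
  induction n with
  | zero =>
    intro v hv m
    rw [Nat.cast_zero, zero_smul] at hv
    have h0 : a0 v = 0 := lnss_kill a0 a0d hadj0 hv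
    match m with
    | 0 => simpa using hPi_id v h0
    | m + 1 =>
      rw [if_neg (Nat.succ_ne_zero m), lnss_pow_succ_apply, h0, map_zero, map_zero]
  | succ n ih =>
    intro v hv m
    have hw : a0d (a0 (a0 v)) = (n : ℂ) • a0 v := by
      have := lnss_shift a0 a0d hccr0 hv
      rw [this]; norm_num
    match m with
    | 0 =>
      rw [if_neg (Nat.succ_ne_zero n).symm]
      have hc : ((n : ℂ) + 1) ≠ 0 := Nat.cast_add_one_ne_zero n
      have hv' : v = ((n : ℂ) + 1)⁻¹ • a0d (a0 v) := by
        rw [hv]; push_cast; rw [inv_smul_smul₀ hc]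
      have hkill : Pi0 (a0d (a0 v)) = 0 := by
        have := congrArg (fun T : Module.End ℂ V => T (a0 v)) hPi_kills
        simpa using this
      simp only [pow_zero, Module.End.one_apply]
      rw [hv', map_smul, hkill, smul_zero]
    | m + 1 =>
      rw [lnss_pow_succ_apply, ih (a0 v) hw m, lnss_pow_succ_apply]
      by_cases h : m = n
      · rw [if_pos h, if_pos (by omega : m + 1 = n + 1)]
      · rw [if_neg h, if_neg (by omega : ¬ m + 1 = n + 1)]

/-- `⟨a₀ v, a₀ v⟩ = n ⟨v,v⟩` for an eigenvector with conj-invariant eigenvalue. -/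
lemma lnss_inner_step (a0 a0d : Module.End ℂ V)
    (hadj0 : ∀ x y : V, (inner ℂ (a0d x) y : ℂ) = inner ℂ x (a0 y))
    {v : V} {n : ℂ} (hn : (starRingEnd ℂ) n = n) (hv : a0d (a0 v) = n • v) :
    (inner ℂ (a0 v) (a0 v) : ℂ) = n * inner ℂ v v := by
  have h := hadj0 (a0 v) v
  rw [hv, inner_smul_left, hn] at h
  exact h.symm

/-- Norm identity: `⟨a₀^n v, a₀^n v⟩ = n! ⟨v,v⟩` for an `n`-eigenvector. -/
lemma lnss_nrm (a0 a0d : Module.End ℂ V)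
    (hccr0 : a0 * a0d - a0d * a0 = 1)
    (hadj0 : ∀ x y : V, (inner ℂ (a0d x) y : ℂ) = inner ℂ x (a0 y)) :
    ∀ (n : ℕ) (v : V), a0d (a0 v) = (n : ℂ) • v →
      (inner ℂ ((a0 ^ n) v) ((a0 ^ n) v) : ℂ) = (n.factorial : ℂ) * inner ℂ v v := by
  intro n
  induction n with
  | zero => intro v hv; simp
  | succ n ih =>
    intro v hv
    have hw : a0d (a0 (a0 v)) = (n : ℂ) • a0 v := by
      have := lnss_shift a0 a0d hccr0 hv
      rw [this]; norm_num
    have hinner : (inner ℂ (a0 v) (a0 v) : ℂ) = ((n : ℕ) + 1 : ℂ) * inner ℂ v v := by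
      have := lnss_inner_step a0 a0d hadj0
        (by push_cast; simp : (starRingEnd ℂ) ((n + 1 : ℕ) : ℂ) = ((n + 1 : ℕ) : ℂ)) hv
      push_cast at this ⊢
      exact this
    rw [lnss_pow_succ_apply, ih (a0 v) hw, hinner, Nat.factorial_succ]
    push_cast
    ring

end LnssHelpers

/-- The LNSS excitation map `UΨ = ⊕_j 𝒬^{⊗j}(a₀^{N-j}/√((N-j)!) Ψ)` intertwines
`a_k† a₀` with `a_k† √(N-N₊)`: `U a_k† a₀ U† = a_k† √(N-N₊)` on `ℱ₊^{≤N}`.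
Here the Fock space is abstracted as an inner ℂ product space `V` carrying a CCR
representation with condensate mode operators `a₀, a₀†`, excitation mode operators
`a_p, a_p†` (`p ∈ ι`, `0 ∉ ι`), `Π` the projection onto the mode-`0` vacuum sector
(so that `U = ∑_m (m!)^{-1/2} Π a₀^m` on the `N`-particle sector), `N₊ = ∑_p a_p† a_p`
the excitation number operator and `S = √(N-N₊)` defined spectrally. On the
`N`-particle sector, `U` is isometric and `U (a_k† a₀ Ψ) = a_k† (S (U Ψ))`. -/
theorem lnss_intertwining
    {V : Type*} [NormedAddCommGroup V] [InnerProductSpace ℂ V]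
    {ι : Type*} [Fintype ι] [DecidableEq ι]
    (a0 a0d : Module.End ℂ V) (a ad : ι → Module.End ℂ V)
    (hadj0 : ∀ x y : V, (inner ℂ (a0d x) y : ℂ) = inner ℂ x (a0 y))
    (hadj : ∀ p (x y : V), (inner ℂ (ad p x) y : ℂ) = inner ℂ x (a p y))
    (hccr0 : a0 * a0d - a0d * a0 = 1)
    (hccr : ∀ p q, a p * ad q - ad q * a p = if p = q then 1 else 0)
    (hcomm0a : ∀ p, a0 * a p = a p * a0) (hcomm0ad : ∀ p, a0 * ad p = ad p * a0)
    (hcomm0da : ∀ p, a0d * a p = a p * a0d) (hcomm0dad : ∀ p, a0d * ad p = ad p * a0d)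
    (hcomm_a : ∀ p q, a p * a q = a q * a p)
    (hcomm_ad : ∀ p q, ad p * ad q = ad q * ad p)
    (Pi0 : Module.End ℂ V)
    (hPi_adj : ∀ x y : V, (inner ℂ (Pi0 x) y : ℂ) = inner ℂ x (Pi0 y))
    (hPi_idem : Pi0 * Pi0 = Pi0)
    (hPi_kills : Pi0 * a0d = 0) (hPi_range : a0 * Pi0 = 0)
    (hPi_id : ∀ Ψ : V, a0 Ψ = 0 → Pi0 Ψ = Ψ)
    (hPi_comm_a : ∀ p, Pi0 * a p = a p * Pi0)
    (hPi_comm_ad : ∀ p, Pi0 * ad p = ad p * Pi0)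
    (N : ℕ) (k : ι)
    (S : Module.End ℂ V)
    (hS : ∀ (Ψ : V) (m : ℕ), (∑ p : ι, ad p * a p) Ψ = (m : ℂ) • Ψ →
      S Ψ = ((Real.sqrt ((N : ℝ) - m)) : ℂ) • Ψ)
    (hgrade : ∀ Ψ : V, (a0d * a0 + ∑ p : ι, ad p * a p) Ψ = (N : ℂ) • Ψ →
      ∃ c : ℕ → V, (∀ j, (∑ p : ι, ad p * a p) (c j) = (j : ℂ) • c j) ∧
        Ψ = ∑ j ∈ Finset.range (N + 1), c j) :
    letI U : Module.End ℂ V :=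
      ∑ m ∈ Finset.range (N + 1),
        (((Real.sqrt (Nat.factorial m))⁻¹ : ℝ) : ℂ) • (Pi0 * a0 ^ m)
    ∀ Ψ : V, (a0d * a0 + ∑ p : ι, ad p * a p) Ψ = (N : ℂ) • Ψ →
      ‖U Ψ‖ = ‖Ψ‖ ∧ U ((ad k * a0) Ψ) = ad k (S (U Ψ)) := by
  intro Ψ hΨ
  set U : Module.End ℂ V := ∑ m ∈ Finset.range (N + 1),
      (((Real.sqrt (Nat.factorial m))⁻¹ : ℝ) : ℂ) • (Pi0 * a0 ^ m) with hUdef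
  set Np : Module.End ℂ V := ∑ p : ι, ad p * a p with hNpdef
  -- commutation facts
  have hNp_a0 : Np * a0 = a0 * Np := by
    rw [hNpdef, Finset.sum_mul, Finset.mul_sum]
    refine Finset.sum_congr rfl fun p _ => ?_
    rw [mul_assoc, ← hcomm0a p, ← mul_assoc, ← hcomm0ad p, mul_assoc]
  have hNp_a0d : Np * a0d = a0d * Np := by
    rw [hNpdef, Finset.sum_mul, Finset.mul_sum]
    refine Finset.sum_congr rfl fun p _ => ?_
    rw [mul_assoc, ← hcomm0da p, ← mul_assoc, ← hcomm0dad p, mul_assoc]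
  have hNp_A0 : Np * (a0d * a0) = (a0d * a0) * Np := by
    rw [← mul_assoc, hNp_a0d, mul_assoc, hNp_a0, ← mul_assoc]
  have hNp_A0_app : ∀ x : V, Np (a0d (a0 x)) = a0d (a0 (Np x)) := by
    intro x
    have h1 := congrArg (fun T : Module.End ℂ V => T x) hNp_A0
    simpa only [Module.End.mul_apply] using h1
  have hNp_sym : ∀ x y : V, (inner ℂ (Np x) y : ℂ) = inner ℂ x (Np y) := by
    intro x y
    rw [hNpdef]
    simp only [LinearMap.coe_sum, Finset.sum_apply, Module.End.mul_apply, sum_inner,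
      inner_sum]
    refine Finset.sum_congr rfl fun p _ => ?_
    rw [hadj p (a p x) y, ← inner_conj_symm x (ad p (a p y)), hadj p (a p y) x,
      inner_conj_symm]
  obtain ⟨c, hc, hcs⟩ := hgrade Ψ hΨ
  have hNp_c_pow : ∀ (j : ℕ) (m : ℕ), Np ((a0 ^ m) (c j)) = (j : ℂ) • (a0 ^ m) (c j) := by
    intro j m
    have hcNa : Commute Np a0 := hNp_a0
    have hcom : Np * a0 ^ m = a0 ^ m * Np := hcNa.pow_right m
    have h1 := congrArg (fun T : Module.End ℂ V => T (c j)) hcom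
    simp only [Module.End.mul_apply] at h1
    rw [h1, hc j, map_smul]
  -- Step A : a0d a0 eigenvalues of the c j
  have hA : ∀ j ∈ Finset.range (N + 1), a0d (a0 (c j)) = ((N - j : ℕ) : ℂ) • c j := by
    have hwz : ∀ i ∈ Finset.range (N + 1),
        (fun j => a0d (a0 (c j)) + ((j : ℂ) - N) • c j) i = 0 := by
      refine lnss_eig_sum_zero Np hNp_sym _ _ (fun j hj => ?_) ?_
      · have e1 : Np (a0d (a0 (c j))) = (j : ℂ) • a0d (a0 (c j)) := by
          rw [hNp_A0_app, hc j, map_smul, map_smul]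
        rw [map_add, e1, map_smul, hc j, smul_comm ((j : ℂ) - N) (j : ℂ), ← smul_add]
      · have h3 : ∑ j ∈ Finset.range (N + 1), (a0d (a0 (c j)) + Np (c j))
            = (a0d * a0 + Np) Ψ := by
          rw [hcs]
          simp only [LinearMap.add_apply, Module.End.mul_apply, map_sum,
            Finset.sum_add_distrib]
        have h2 : ∑ j ∈ Finset.range (N + 1), (a0d (a0 (c j)) + Np (c j))
            = ∑ j ∈ Finset.range (N + 1), (N : ℂ) • c j := by
          rw [h3, hΨ, hcs, Finset.smul_sum]
        have h4 : ∑ j ∈ Finset.range (N + 1), (a0d (a0 (c j)) + ((j : ℂ) - N) • c j)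
            = (∑ j ∈ Finset.range (N + 1), (a0d (a0 (c j)) + Np (c j)))
              - ∑ j ∈ Finset.range (N + 1), (N : ℂ) • c j := by
          rw [← Finset.sum_sub_distrib]
          refine Finset.sum_congr rfl fun j _ => ?_
          rw [hc j, sub_smul]
          abel
        rw [h4, h2, sub_self]
    intro j hj
    have h0 := hwz j hj
    have h5 := eq_neg_of_add_eq_zero_left h0
    rw [Nat.cast_sub (by simp only [Finset.mem_range] at hj; omega : j ≤ N), h5, ← neg_smul]
    congr 1
    ring
  have hUapp : ∀ x : V, U x = ∑ m ∈ Finset.range (N + 1),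
      (((Real.sqrt (Nat.factorial m))⁻¹ : ℝ) : ℂ) • Pi0 ((a0 ^ m) x) := by
    intro x
    rw [hUdef]
    simp only [LinearMap.coe_sum, Finset.sum_apply, LinearMap.smul_apply,
      Module.End.mul_apply]
  set d : ℕ → V := fun j =>
      (((Real.sqrt (Nat.factorial (N - j)))⁻¹ : ℝ) : ℂ) • (a0 ^ (N - j)) (c j) with hd
  have hUΨ : U Ψ = ∑ j ∈ Finset.range (N + 1), d j := by
    rw [hUapp, hcs]
    simp only [map_sum, Finset.smul_sum]
    rw [Finset.sum_comm]
    refine Finset.sum_congr rfl fun j hj => ?_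
    have hpia := lnss_pia a0 a0d Pi0 hccr0 hadj0 hPi_kills hPi_id (N - j) (c j) (hA j hj)
    have e1 : ∀ m ∈ Finset.range (N + 1),
        (((Real.sqrt (Nat.factorial m))⁻¹ : ℝ) : ℂ) • Pi0 ((a0 ^ m) (c j))
        = (if m = N - j then
            (((Real.sqrt (Nat.factorial m))⁻¹ : ℝ) : ℂ) • (a0 ^ (N - j)) (c j) else 0) := by
      intro m _
      rw [hpia m]
      split_ifs <;> simp
    rw [Finset.sum_congr rfl e1, Finset.sum_ite_eq' (Finset.range (N + 1)) (N - j)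
      (fun m => (((Real.sqrt (Nat.factorial m))⁻¹ : ℝ) : ℂ) • (a0 ^ (N - j)) (c j)),
      if_pos (by simp only [Finset.mem_range]; omega)]
  have hNp_d : ∀ j : ℕ, Np (d j) = (j : ℂ) • d j := by
    intro j
    simp only [hd]
    rw [map_smul, hNp_c_pow j, smul_comm]
  constructor
  · -- isometry
    have hinnerU : (inner ℂ (U Ψ) (U Ψ) : ℂ)
        = ∑ j ∈ Finset.range (N + 1), (inner ℂ (d j) (d j) : ℂ) := by
      rw [hUΨ, inner_sum]
      refine Finset.sum_congr rfl fun j hj => ?_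
      rw [sum_inner, Finset.sum_eq_single_of_mem j hj]
      intro i _ hij
      exact lnss_eig_orth Np hNp_sym (hNp_d i) (hNp_d j) hij
    have hinnerΨ : (inner ℂ Ψ Ψ : ℂ)
        = ∑ j ∈ Finset.range (N + 1), (inner ℂ (c j) (c j) : ℂ) := by
      rw [hcs, inner_sum]
      refine Finset.sum_congr rfl fun j hj => ?_
      rw [sum_inner, Finset.sum_eq_single_of_mem j hj]
      intro i _ hij
      exact lnss_eig_orth Np hNp_sym (hc i) (hc j) hij
    have hdinner : ∀ j ∈ Finset.range (N + 1),
        (inner ℂ (d j) (d j) : ℂ) = inner ℂ (c j) (c j) := by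
      intro j hj
      have hf : (0 : ℝ) < ((N - j).factorial : ℝ) := by
        exact_mod_cast (N - j).factorial_pos
      have hone : ((((Real.sqrt ((N - j).factorial))⁻¹ : ℝ) : ℂ))
          * ((((Real.sqrt ((N - j).factorial))⁻¹ : ℝ) : ℂ)
          * ((((N - j).factorial : ℕ) : ℂ) * (inner ℂ (c j) (c j) : ℂ)))
          = inner ℂ (c j) (c j) := by
        have hr : (Real.sqrt ((N - j).factorial))⁻¹ * (Real.sqrt ((N - j).factorial))⁻¹
            * (((N - j).factorial : ℕ) : ℝ) = 1 := by
          rw [← mul_inv, Real.mul_self_sqrt hf.le]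
          exact inv_mul_cancel₀ hf.ne'
        have hr2 : ((((Real.sqrt ((N - j).factorial))⁻¹ : ℝ) : ℂ))
            * ((((Real.sqrt ((N - j).factorial))⁻¹ : ℝ) : ℂ))
            * (((N - j).factorial : ℕ) : ℂ) = 1 := by
          calc ((((Real.sqrt ((N - j).factorial))⁻¹ : ℝ) : ℂ))
              * ((((Real.sqrt ((N - j).factorial))⁻¹ : ℝ) : ℂ))
              * (((N - j).factorial : ℕ) : ℂ)
              = ((((Real.sqrt ((N - j).factorial))⁻¹ * (Real.sqrt ((N - j).factorial))⁻¹
                * (((N - j).factorial : ℕ) : ℝ)) : ℝ) : ℂ) := by push_cast; ring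
            _ = 1 := by rw [hr]; norm_num
        calc ((((Real.sqrt ((N - j).factorial))⁻¹ : ℝ) : ℂ))
            * ((((Real.sqrt ((N - j).factorial))⁻¹ : ℝ) : ℂ)
            * ((((N - j).factorial : ℕ) : ℂ) * (inner ℂ (c j) (c j) : ℂ)))
            = (((((Real.sqrt ((N - j).factorial))⁻¹ : ℝ) : ℂ))
              * ((((Real.sqrt ((N - j).factorial))⁻¹ : ℝ) : ℂ))
              * (((N - j).factorial : ℕ) : ℂ)) * (inner ℂ (c j) (c j) : ℂ) := by ring
          _ = inner ℂ (c j) (c j) := by rw [hr2, one_mul]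
      simp only [hd]
      rw [inner_smul_left, inner_smul_right,
        lnss_nrm a0 a0d hccr0 hadj0 (N - j) (c j) (hA j hj), Complex.conj_ofReal]
      exact hone
    have h2 : (inner ℂ (U Ψ) (U Ψ) : ℂ) = inner ℂ Ψ Ψ := by
      rw [hinnerU, hinnerΨ]
      exact Finset.sum_congr rfl hdinner
    have h3 : ‖U Ψ‖ ^ 2 = ‖Ψ‖ ^ 2 := by
      rw [inner_self_eq_norm_sq_to_K, inner_self_eq_norm_sq_to_K] at h2
      exact_mod_cast h2
    calc ‖U Ψ‖ = Real.sqrt (‖U Ψ‖ ^ 2) := (Real.sqrt_sq (norm_nonneg _)).symm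
      _ = Real.sqrt (‖Ψ‖ ^ 2) := by rw [h3]
      _ = ‖Ψ‖ := Real.sqrt_sq (norm_nonneg _)
  · -- intertwining
    have hcomm_adk_pow : ∀ (m : ℕ) (x : V), (a0 ^ m) (ad k x) = ad k ((a0 ^ m) x) := by
      intro m x
      have hcak : Commute a0 (ad k) := hcomm0ad k
      have hcom : a0 ^ m * ad k = ad k * a0 ^ m := hcak.pow_left m
      have h1 := congrArg (fun T : Module.End ℂ V => T x) hcom
      simpa only [Module.End.mul_apply] using h1
    have hPi_adk : ∀ x : V, Pi0 (ad k x) = ad k (Pi0 x) := by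
      intro x
      have h1 := congrArg (fun T : Module.End ℂ V => T x) (hPi_comm_ad k)
      simpa only [Module.End.mul_apply] using h1
    have hRHS : ad k (S (U Ψ)) = ad k (∑ j ∈ Finset.range (N + 1),
        ((Real.sqrt ((N : ℝ) - j) : ℝ) : ℂ) • d j) := by
      congr 1
      rw [hUΨ, map_sum]
      exact Finset.sum_congr rfl fun j _ => hS (d j) j (hNp_d j)
    have hLHS : U ((ad k * a0) Ψ) = ad k (∑ j ∈ Finset.range (N + 1),
        ∑ m ∈ Finset.range (N + 1),
          (((Real.sqrt (Nat.factorial m))⁻¹ : ℝ) : ℂ) • Pi0 ((a0 ^ (m + 1)) (c j))) := by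
      rw [Module.End.mul_apply, hUapp]
      have e1 : (∑ m ∈ Finset.range (N + 1),
          (((Real.sqrt (Nat.factorial m))⁻¹ : ℝ) : ℂ) • Pi0 ((a0 ^ m) (ad k (a0 Ψ))))
          = ad k (∑ m ∈ Finset.range (N + 1),
            (((Real.sqrt (Nat.factorial m))⁻¹ : ℝ) : ℂ) • Pi0 ((a0 ^ (m + 1)) Ψ)) := by
        rw [map_sum]
        refine Finset.sum_congr rfl fun m _ => ?_
        rw [hcomm_adk_pow, hPi_adk, ← map_smul, lnss_pow_succ_apply]
      have e2 : (∑ m ∈ Finset.range (N + 1),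
          (((Real.sqrt (Nat.factorial m))⁻¹ : ℝ) : ℂ) • Pi0 ((a0 ^ (m + 1)) Ψ))
          = ∑ j ∈ Finset.range (N + 1), ∑ m ∈ Finset.range (N + 1),
            (((Real.sqrt (Nat.factorial m))⁻¹ : ℝ) : ℂ) • Pi0 ((a0 ^ (m + 1)) (c j)) := by
        rw [hcs]
        simp only [map_sum, Finset.smul_sum]
        exact Finset.sum_comm
      rw [e1, e2]
    have hg : ∀ j ∈ Finset.range (N + 1),
        (∑ m ∈ Finset.range (N + 1),
          (((Real.sqrt (Nat.factorial m))⁻¹ : ℝ) : ℂ) • Pi0 ((a0 ^ (m + 1)) (c j)))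
        = ((Real.sqrt ((N : ℝ) - j) : ℝ) : ℂ) • d j := by
      intro j hj
      have hpia := lnss_pia a0 a0d Pi0 hccr0 hadj0 hPi_kills hPi_id (N - j) (c j) (hA j hj)
      by_cases hjN : j = N
      · have hcast0 : ((N : ℝ) - (j : ℝ)) = 0 := by rw [hjN]; ring
        rw [hcast0, Real.sqrt_zero, show ((0 : ℝ) : ℂ) = 0 by norm_num, zero_smul]
        refine Finset.sum_eq_zero fun m _ => ?_
        rw [hpia (m + 1), if_neg (by omega), smul_zero]
      · have hjlt : j < N := by simp only [Finset.mem_range] at hj; omega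
        have e3 : ∀ m ∈ Finset.range (N + 1),
            (((Real.sqrt (Nat.factorial m))⁻¹ : ℝ) : ℂ) • Pi0 ((a0 ^ (m + 1)) (c j))
            = (if m = N - j - 1 then
                (((Real.sqrt (Nat.factorial m))⁻¹ : ℝ) : ℂ) • (a0 ^ (N - j)) (c j)
              else 0) := by
          intro m _
          rw [hpia (m + 1)]
          by_cases h : m = N - j - 1
          · rw [if_pos (by omega : m + 1 = N - j), if_pos h]
          · rw [if_neg (by omega : ¬ m + 1 = N - j), if_neg h, smul_zero]
        rw [Finset.sum_congr rfl e3, Finset.sum_ite_eq' (Finset.range (N + 1)) (N - j - 1)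
          (fun m => (((Real.sqrt (Nat.factorial m))⁻¹ : ℝ) : ℂ) • (a0 ^ (N - j)) (c j)),
          if_pos (by simp only [Finset.mem_range]; omega)]
        simp only [hd]
        rw [smul_smul, ← Complex.ofReal_mul]
        congr 1
        -- real coefficient identity
        obtain ⟨n, hn⟩ : ∃ n, N - j = n + 1 := ⟨N - j - 1, by omega⟩
        have hcast : ((N : ℝ) - (j : ℝ)) = ((n : ℝ) + 1) := by
          have h6 : ((N - j : ℕ) : ℝ) = (N : ℝ) - (j : ℝ) := by
            rw [Nat.cast_sub hjlt.le]
          rw [← h6, hn]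
          push_cast
          ring
        rw [show N - j - 1 = n by omega, hn, hcast]
        have hfs : (((n + 1).factorial : ℕ) : ℝ) = ((n : ℝ) + 1) * ((n.factorial : ℕ) : ℝ) := by
          rw [Nat.factorial_succ]
          push_cast
          ring
        rw [hfs, Real.sqrt_mul (by positivity) _, mul_inv, ← mul_assoc,
          mul_inv_cancel₀ (by positivity : Real.sqrt ((n : ℝ) + 1) ≠ 0), one_mul]
    rw [hLHS, hRHS]
    congr 1
    exact Finset.sum_congr rfl hg
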